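/- (Rodrigues' formula) For every nonzero ω ∈ ℝ³ with θ := ‖ω‖, the matrix exponential of the hat matrix satisfies exp([ω]ₓ) = I + (sin θ / θ)[ω]ₓ + ((1 − cos θ)/θ²)[ω]ₓ². -/

import Mathlib

open Matrix

/-- The hat map sending `ω ∈ ℝ³` to the skew-symmetric matrix `[ω]ₓ` with
`[ω]ₓ h = ω × h`. -/
def hat (ω : EuclideanSpace ℝ (Fin 3)) : Matrix (Fin 3) (Fin 3) ℝ :=
  !![0, -ω 2, ω 1; ω 2, 0, -ω 0; -ω 1, ω 0, 0]

lemma norm_sq_eq (ω : EuclideanSpace ℝ (Fin 3)) :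
    ‖ω‖ ^ 2 = ω 0 ^ 2 + ω 1 ^ 2 + ω 2 ^ 2 := by
  rw [EuclideanSpace.norm_eq, Real.sq_sqrt (by positivity)]
  simp [Fin.sum_univ_three, sq_abs]

lemma hat_cube (ω : EuclideanSpace ℝ (Fin 3)) :
    hat ω ^ 3 = (-(‖ω‖ ^ 2)) • hat ω := by
  rw [norm_sq_eq]
  ext i j
  simp only [pow_succ, pow_zero, one_mul, hat, Matrix.mul_apply, Fin.sum_univ_three,
    Matrix.smul_apply, smul_eq_mul]
  fin_cases i <;> fin_cases j <;> simp <;> ring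

lemma hat_pow_odd (ω : EuclideanSpace ℝ (Fin 3)) (k : ℕ) :
    hat ω ^ (2 * k + 1) = ((-1 : ℝ) ^ k * ‖ω‖ ^ (2 * k)) • hat ω := by
  induction k with
  | zero => simp
  | succ k ih =>
      have h : 2 * (k + 1) + 1 = (2 * k + 1) + 2 := by ring
      rw [h, pow_add, ih, smul_mul_assoc, ← pow_succ' (hat ω) 2,
        show (2:ℕ) + 1 = 3 from rfl, hat_cube, smul_smul]
      congr 1
      ring

lemma hat_pow_even (ω : EuclideanSpace ℝ (Fin 3)) (k : ℕ) :
    hat ω ^ (2 * k + 2) = ((-1 : ℝ) ^ k * ‖ω‖ ^ (2 * k)) • (hat ω * hat ω) := by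
  have : 2 * k + 2 = (2 * k + 1) + 1 := by ring
  rw [this, pow_succ, hat_pow_odd, smul_mul_assoc]

/-- **Rodrigues' formula**: for nonzero `ω ∈ ℝ³` with `θ := ‖ω‖`,
`exp([ω]ₓ) = I + (sin θ / θ)[ω]ₓ + ((1 − cos θ)/θ²)[ω]ₓ²`. -/
theorem rodrigues_formula (ω : EuclideanSpace ℝ (Fin 3)) (hω : ω ≠ 0) :
    NormedSpace.exp (hat ω) =
      (1 : Matrix (Fin 3) (Fin 3) ℝ) + (Real.sin ‖ω‖ / ‖ω‖) • hat ω +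
        ((1 - Real.cos ‖ω‖) / ‖ω‖ ^ 2) • (hat ω * hat ω) := by
  set θ := ‖ω‖ with hθ
  have hθ0 : θ ≠ 0 := norm_ne_zero_iff.mpr hω
  set A := hat ω with hA
  set f : ℕ → Matrix (Fin 3) (Fin 3) ℝ := fun n => ((Nat.factorial n : ℝ))⁻¹ • A ^ n with hf
  -- odd part
  have hodd : HasSum (fun k => f (2 * k + 1)) ((Real.sin θ / θ) • A) := by
    have h := ((Real.hasSum_sin θ).div_const θ).smul_const A
    convert h using 2 with k
    rw [hf]
    simp only [hA, hat_pow_odd ω k]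
    rw [smul_smul]
    congr 1
    rw [pow_succ]
    field_simp
    ring
  -- even (≥ 2) part
  have heven : HasSum (fun k => f (2 * k + 2)) (((1 - Real.cos θ) / θ ^ 2) • (A * A)) := by
    have h1 := Real.hasSum_cos θ
    have h2 : HasSum (fun k : ℕ => (-1 : ℝ) ^ (k + 1) * θ ^ (2 * (k + 1)) / (Nat.factorial (2 * (k + 1)) : ℝ))
        (Real.cos θ - 1) := by
      refine (hasSum_nat_add_iff
        (f := fun n : ℕ => (-1 : ℝ) ^ n * θ ^ (2 * n) / (Nat.factorial (2 * n) : ℝ)) 1).mpr ?_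
      simpa using h1
    have h3 := ((h2.neg.div_const (θ ^ 2)).smul_const (A * A))
    convert h3 using 2 with k
    · rw [hf]
      simp only [hA, hat_pow_even ω k]
      rw [smul_smul]
      congr 1
      have : 2 * (k + 1) = 2 * k + 2 := by ring
      rw [this, pow_succ _ k, pow_add]
      field_simp
      ring
    · rw [neg_sub]
  -- combine
  have hall : HasSum (fun m => f (m + 1))
      ((Real.sin θ / θ) • A + ((1 - Real.cos θ) / θ ^ 2) • (A * A)) := by
    refine HasSum.even_add_odd ?_ ?_
    · convert hodd using 2 with k
    · convert heven using 2 with k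
  have hfull : HasSum f ((Real.sin θ / θ) • A + ((1 - Real.cos θ) / θ ^ 2) • (A * A) + 1) := by
    have := (hasSum_nat_add_iff (f := f) 1).mp hall
    rw [Finset.sum_range_one] at this
    simpa [hf] using this
  rw [NormedSpace.exp_eq_tsum (𝕂 := ℝ)]
  show (∑' n : ℕ, ((Nat.factorial n : ℝ))⁻¹ • A ^ n) = _
  rw [hfull.tsum_eq]
  abel
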